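/- With N defined from F as N(x,y,z) = F(φx,y,z) - F(x,y,φz) + F(x,φy,ξ)η(z) - F(φy,x,z) + F(y,x,φz) - F(y,φx,ξ)η(z) on an almost contact B-metric vector space, one has N(φ²x, φy, φz) = N(φx, φ²y, φz) = -N(φx, φy, φ²z) for all x, y, z. -/
import Mathlib


theorem stmt7 (V : Type*) [AddCommGroup V] [Module ℝ V]
    (φ : V →ₗ[ℝ] V) (ξ : V) (η : V →ₗ[ℝ] ℝ)
    (hφξ : φ ξ = 0) (hφ2 : ∀ x : V, φ (φ x) = -x + η x • ξ)
    (hηφ : ∀ x : V, η (φ x) = 0) (hηξ : η ξ = 1)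
    (g : V →ₗ[ℝ] V →ₗ[ℝ] ℝ) (hsym : ∀ x y : V, g x y = g y x)
    (hB : ∀ x y : V, g (φ x) (φ y) = - g x y + η x * η y)
    (F : V →ₗ[ℝ] V →ₗ[ℝ] V →ₗ[ℝ] ℝ)
    (hF1 : ∀ x y z : V, F x y z = F x z y)
    (hF2 : ∀ x y z : V, F x y z = F x (φ y) (φ z) + η y * F x ξ z + η z * F x y ξ)
    (N : V → V → V → ℝ)
    (hN : ∀ x y z : V, N x y z = F (φ x) y z - F x y (φ z) + F x (φ y) ξ * η z
          - F (φ y) x z + F y x (φ z) - F y (φ x) ξ * η z) :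
    ∀ x y z : V, N (φ (φ x)) (φ y) (φ z) = N (φ x) (φ (φ y)) (φ z) ∧
      N (φ x) (φ (φ y)) (φ z) = - N (φ x) (φ y) (φ (φ z)) := by
  have h3 : ∀ x : V, φ (φ (φ x)) = -(φ x) := by
    intro x
    rw [hφ2]
    simp [hηφ]
  have key : ∀ a u v : V, F a (φ u) (φ v) = F a (φ (φ u)) (φ (φ v)) := by
    intro a u v
    have := hF2 a (φ u) (φ v)
    simpa [hηφ] using this
  intro x y z
  rw [hN, hN, hN]
  simp only [h3, hηφ, map_neg, LinearMap.neg_apply, LinearMap.map_neg, mul_zero]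
  have e1 : F (φ (φ x)) (φ y) (φ (φ z)) = - F (φ (φ x)) (φ (φ y)) (φ z) := by
    rw [key (φ (φ x)) y (φ z), h3]
    simp
  have e2 : F (φ (φ y)) (φ (φ x)) (φ z) = - F (φ (φ y)) (φ x) (φ (φ z)) := by
    rw [key (φ (φ y)) (φ x) z, h3]
    simp
  have e3 : F (φ x) (φ y) (φ z) = F (φ x) (φ (φ y)) (φ (φ z)) := key _ _ _
  have e4 : F (φ y) (φ (φ x)) (φ (φ z)) = F (φ y) (φ x) (φ z) := by
    rw [key (φ y) (φ x) (φ z), h3, h3]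
    simp
  have e5 : F (φ (φ x)) (φ (φ y)) (φ z) = - F (φ (φ x)) (φ y) (φ (φ z)) := by
    rw [key (φ (φ x)) (φ y) z, h3]
    simp
  constructor <;> linarith
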